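/- arXiv:1708.09219 — 3 statements merged into one kernel-verified Lean document; each statement's English description precedes it below -/
import Mathlib

section
/- Let G be a finite group acting ℝ-linearly on ℝ^n via a representation ρ : G → GL(n,ℝ), extended ℂ-linearly to ℂ^n, and let σ denote coordinatewise complex conjugation on ℂ^n. If g ∈ G has odd order and p ∈ ℂ^n satisfies σ(p) = ρ(g)p, then p ∈ ℝ^n (i.e., p has real coordinates). -/
/-- Let a finite group `G` act ℝ-linearly on `ℝⁿ` via
`ρ : G → GL(n, ℝ)`, extended ℂ-linearly to `ℂⁿ`, and let `σ` be coordinatewise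
complex conjugation on `ℂⁿ`.  If `g ∈ G` has odd order and `p ∈ ℂⁿ` satisfies
`σ(p) = ρ(g) p`, then `p` has real coordinates. -/
theorem stmt2 (n : ℕ) (G : Type*) [Group G] [Finite G]
    (ρ : G →* Matrix.GeneralLinearGroup (Fin n) ℝ) (g : G)
    (hg : Odd (orderOf g)) (p : Fin n → ℂ)
    (hp : (fun i => (starRingEnd ℂ) (p i)) =
      ((ρ g : Matrix (Fin n) (Fin n) ℝ).map Complex.ofReal).mulVec p) :
    ∀ i, (p i).im = 0 := by
  set M : Matrix (Fin n) (Fin n) ℂ :=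
    (ρ g : Matrix (Fin n) (Fin n) ℝ).map Complex.ofReal with hM
  have hMdef : M = Complex.ofRealHom.mapMatrix (ρ g : Matrix (Fin n) (Fin n) ℝ) := rfl
  -- M ^ orderOf g = 1
  have hord : M ^ orderOf g = 1 := by
    rw [hMdef, ← map_pow, ← Units.val_pow_eq_pow_val, ← map_pow, pow_orderOf_eq_one,
      map_one, Units.val_one, map_one]
  -- conjugating hp gives M (σ p) = p ... i.e. p = M.mulVec (conj p)
  have hconj : M.mulVec (fun i => (starRingEnd ℂ) (p i)) = p := by
    funext i
    have := congrFun hp i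
    have h2 := congrArg (starRingEnd ℂ) this
    rw [Complex.conj_conj] at h2
    rw [h2]
    simp only [Matrix.mulVec, dotProduct, map_sum, map_mul, hM,
      Matrix.map_apply, Complex.conj_ofReal]
  -- hence (M^2) p = p
  have hsq : (M ^ 2).mulVec p = p := by
    rw [pow_two, ← Matrix.mulVec_mulVec, ← hp, hconj]
  -- hence (M^(2k)) p = p for all k
  have hpow : ∀ k : ℕ, (M ^ (2 * k)).mulVec p = p := by
    intro k
    induction k with
    | zero => simp [Matrix.mulVec_one]
    | succ k ih =>
      rw [Nat.mul_succ, pow_add, ← Matrix.mulVec_mulVec, hsq, ih]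
  -- write orderOf g = 2t+1
  obtain ⟨t, ht⟩ := hg
  have hMp : M.mulVec p = p := by
    have h1 : M.mulVec ((M ^ (2 * t)).mulVec p) = p := by
      rw [Matrix.mulVec_mulVec, ← pow_succ', ← ht, hord, Matrix.one_mulVec]
    rwa [hpow t] at h1
  have hfix : (fun i => (starRingEnd ℂ) (p i)) = p := by rw [hp, hMp]
  intro i
  have := congrFun hfix i
  have h3 : -(p i).im = (p i).im := by
    simpa [Complex.ext_iff] using this
  linarith
end

section
/- Let g : ℝ^n → ℝ^n be an orthogonal linear map (preserving the standard inner product), extended ℂ-bilinearly to g : ℂ^n → ℂ^n, and let σ : ℂ^n → ℂ^n denote coordinatewise complex conjugation. Let A : ℂ^n → ℂ^n be a map satisfying A(σ(z)) = σ(A(z)) and A(g(z)) = g(A(z)) for all z ∈ ℂ^n. Then for every p, w ∈ ℂ^n with σ(p) = g(p) and σ(w) = g(w), the value Σ_{i=1}^n A_i(p)·w_i is a real number. -/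
open Matrix


/-- Let `g : ℝⁿ → ℝⁿ` be an orthogonal linear map (given by an
orthogonal matrix `M`), extended ℂ-bilinearly to `ℂⁿ`, and let `σ` denote
coordinatewise complex conjugation.  Let `A : ℂⁿ → ℂⁿ` satisfy `A ∘ σ = σ ∘ A`
and `A ∘ g = g ∘ A`.  Then for all `p, w ∈ ℂⁿ` with `σ(p) = g(p)` and
`σ(w) = g(w)`, the value `Σᵢ Aᵢ(p)·wᵢ` is real. -/
theorem stmt3 (n : ℕ) (M : Matrix (Fin n) (Fin n) ℝ) (hM : M.transpose * M = 1)
    (A : (Fin n → ℂ) → (Fin n → ℂ))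
    (hAσ : ∀ z : Fin n → ℂ,
      A (fun i => (starRingEnd ℂ) (z i)) = fun i => (starRingEnd ℂ) (A z i))
    (hAg : ∀ z : Fin n → ℂ,
      A ((M.map Complex.ofReal).mulVec z) = (M.map Complex.ofReal).mulVec (A z))
    (p w : Fin n → ℂ)
    (hp : (fun i => (starRingEnd ℂ) (p i)) = (M.map Complex.ofReal).mulVec p)
    (hw : (fun i => (starRingEnd ℂ) (w i)) = (M.map Complex.ofReal).mulVec w) :
    (∑ i, A p i * w i).im = 0 := by
  set N := M.map Complex.ofReal with hN
  have hNN : N.transpose * N = 1 := by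
    have : (M.transpose * M).map (Complex.ofRealHom : ℝ →+* ℂ) = N.transpose * N := by
      rw [Matrix.map_mul, Matrix.transpose_map]
      rfl
    rw [hM] at this
    rw [← this, Matrix.map_one _ (map_zero _) (map_one _)]
  -- orthogonality: dot products are preserved
  have hdot : ∀ u v : Fin n → ℂ,
      (N.mulVec u) ⬝ᵥ (N.mulVec v) = u ⬝ᵥ v := by
    intro u v
    rw [Matrix.dotProduct_mulVec, ← Matrix.vecMul_transpose, Matrix.vecMul_vecMul, hNN, Matrix.vecMul_one]
  have key : (starRingEnd ℂ) (∑ i, A p i * w i) = ∑ i, A p i * w i := by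
    rw [map_sum]
    have h1 : (fun i => (starRingEnd ℂ) (A p i)) = N.mulVec (A p) := by
      rw [← hAσ, hp, hAg]
    calc ∑ i, (starRingEnd ℂ) (A p i * w i)
        = ∑ i, (N.mulVec (A p)) i * (N.mulVec w) i := by
          refine Finset.sum_congr rfl fun i _ => ?_
          rw [RingHom.map_mul, ← hw, congrFun h1 i]
      _ = (N.mulVec (A p)) ⬝ᵥ (N.mulVec w) := rfl
      _ = (A p) ⬝ᵥ w := hdot _ _
      _ = ∑ i, A p i * w i := rfl
  exact Complex.conj_eq_iff_im.mp key
end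

section
/- Fix n ≥ 1 and let G be a subgroup of the group {−1,1}^n, acting on the real polynomial ring ℝ[x_1,…,x_n] by (ε·φ)(x_1,…,x_n) = φ(ε_1 x_1,…,ε_n x_n). Let P be the linear span of the monomials x^k = x_1^{k_1}⋯x_n^{k_n} with 0 ≤ k_i ≤ 2 for all i, and let W = { φ ∈ P : ε·φ = (∏_{i=1}^n ε_i)·φ for all ε ∈ G }. Define the symmetric bilinear form B on P by B(φ,ψ) := the coefficient of the monomial x_1²⋯x_n² in the product φψ. Then the restriction of B to W is nondegenerate and has signature 1; that is, dim W is odd, say dim W = 2m+1, and the quadratic form φ ↦ B(φ,φ) on W is equivalent over ℝ to a diagonal form with m+1 entries equal to +1 and m entries equal to −1. -/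
/-- The span of the monomials `x^k`, `0 ≤ kᵢ ≤ 2`, in `ℝ[x₁,…,xₙ]`, identified
with the space of coefficient functions `(Fin n → Fin 3) → ℝ`.  `W n G` is the
subspace of those `φ` with `ε·φ = (∏ᵢ εᵢ)·φ` for all `ε ∈ G ≤ {±1}ⁿ`, where
`(ε·φ)(x₁,…,xₙ) = φ(ε₁x₁,…,εₙxₙ)`, i.e. the coefficient of `x^k` in `ε·φ` is
`(∏ᵢ εᵢ^{kᵢ})·φ_k`. -/
def W10 (n : ℕ) (G : Subgroup (Fin n → ℤˣ)) :
    Submodule ℝ ((Fin n → Fin 3) → ℝ) where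
  carrier := {c | ∀ ε ∈ G, ∀ k : Fin n → Fin 3,
    (∏ i, ((ε i : ℤ) : ℝ) ^ (k i : ℕ)) * c k = (∏ i, ((ε i : ℤ) : ℝ)) * c k}
  add_mem' := by
    intro a b ha hb ε hε k
    simp only [Pi.add_apply, mul_add, ha ε hε k, hb ε hε k]
  zero_mem' := by
    intro ε hε k
    simp
  smul_mem' := by
    intro r a ha ε hε k
    simp only [Pi.smul_apply, smul_eq_mul]
    rw [mul_left_comm, ha ε hε k, mul_left_comm]

/-- The symmetric bilinear form `B(φ,ψ) :=` coefficient of `x₁²⋯xₙ²` in `φψ`: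
in coefficients, `B(φ,ψ) = Σ_k φ_k · ψ_{2-k}`. -/
def B10 (n : ℕ) (c d : (Fin n → Fin 3) → ℝ) : ℝ :=
  ∑ k : Fin n → Fin 3, c k * d fun i => (⟨2 - (k i : ℕ), by omega⟩ : Fin 3)

noncomputable section Stmt10Aux

namespace Stmt10Aux

variable (n : ℕ) (G : Subgroup (Fin n → ℤˣ))

/-- The involution `k ↦ 2 - k` on exponent vectors. -/
def sg (k : Fin n → Fin 3) : Fin n → Fin 3 := fun i => ⟨2 - (k i : ℕ), by omega⟩

lemma sg_sg (k : Fin n → Fin 3) : sg n (sg n k) = k := by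
  funext i
  have := (k i).isLt
  apply Fin.ext
  simp only [sg]
  omega

lemma sg_inj {k l : Fin n → Fin 3} (h : sg n k = sg n l) : k = l := by
  have := congrArg (sg n) h
  rwa [sg_sg, sg_sg] at this

/-- The all-ones exponent vector, i.e. the monomial `x₁⋯xₙ`. -/
def ones : Fin n → Fin 3 := fun _ => 1

lemma sg_ones : sg n (ones n) = ones n := by
  funext i
  apply Fin.ext
  simp [sg, ones]

lemma sg_eq_self_iff (k : Fin n → Fin 3) : sg n k = k ↔ k = ones n := by
  constructor
  · intro h
    funext i
    have h2 := congrArg Fin.val (congrFun h i)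
    have := (k i).isLt
    apply Fin.ext
    simp only [sg] at h2
    simp only [ones]
    omega
  · intro h; rw [h]; exact sg_ones n

/-- `k` is an allowed exponent: the monomial `x^k` transforms like `dx` under `G`. -/
def allowed (k : Fin n → Fin 3) : Prop :=
  ∀ ε ∈ G, (∏ i, ((ε i : ℤ) : ℝ) ^ (k i : ℕ)) = ∏ i, ((ε i : ℤ) : ℝ)

lemma units_sq (ε : ℤˣ) : ((ε : ℤ) : ℝ) ^ 2 = 1 := by
  rcases Int.units_eq_one_or ε with h | h <;> simp [h]

lemma pow_sg (ε : Fin n → ℤˣ) (k : Fin n → Fin 3) :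
    (∏ i, ((ε i : ℤ) : ℝ) ^ ((sg n k) i : ℕ)) = ∏ i, ((ε i : ℤ) : ℝ) ^ (k i : ℕ) := by
  refine Finset.prod_congr rfl fun i _ => ?_
  have h := units_sq (ε i)
  have hv : ((sg n k) i : ℕ) = 2 - (k i : ℕ) := rfl
  rw [hv]
  have ha : (k i : ℕ) < 3 := (k i).isLt
  interval_cases h2 : (k i : ℕ) <;> simp [h]

lemma allowed_sg (k : Fin n → Fin 3) : allowed n G (sg n k) ↔ allowed n G k := by
  unfold allowed
  constructor <;> intro h ε hε <;> have h2 := h ε hε <;>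
    rwa [pow_sg] at *

lemma allowed_ones : allowed n G (ones n) := fun ε _ => by
  simp [ones]

lemma mem_W10_iff {c : (Fin n → Fin 3) → ℝ} :
    c ∈ W10 n G ↔ ∀ k, ¬ allowed n G k → c k = 0 := by
  constructor
  · intro h k hk
    rw [allowed] at hk
    push_neg at hk
    obtain ⟨ε, hε, hne⟩ := hk
    have h2 := h ε hε k
    have h3 : ((∏ i, ((ε i : ℤ) : ℝ) ^ (k i : ℕ)) - ∏ i, ((ε i : ℤ) : ℝ)) * c k = 0 := by
      rw [sub_mul, h2, sub_self]
    rcases mul_eq_zero.mp h3 with h4 | h4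
    · exact absurd (sub_eq_zero.mp h4) hne
    · exact h4
  · intro h ε hε k
    by_cases ha : allowed n G k
    · rw [ha ε hε]
    · rw [h k ha, mul_zero, mul_zero]

lemma B10_eq (c d : (Fin n → Fin 3) → ℝ) :
    B10 n c d = ∑ k, c k * d (sg n k) := rfl

/-- A fixed enumeration of the exponent vectors. -/
def F : (Fin n → Fin 3) ≃ Fin (Fintype.card (Fin n → Fin 3)) := Fintype.equivFin _

open Classical in
/-- A set of representatives of the `σ`-orbits of size 2 inside the allowed set. -/
def Pr : Finset (Fin n → Fin 3) :=
  Finset.univ.filter fun k => allowed n G k ∧ (F n k : ℕ) < (F n (sg n k) : ℕ)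

lemma mem_Pr {k : Fin n → Fin 3} :
    k ∈ Pr n G ↔ allowed n G k ∧ (F n k : ℕ) < (F n (sg n k) : ℕ) := by
  simp [Pr]

lemma allowed_of_mem_Pr {k : Fin n → Fin 3} (h : k ∈ Pr n G) : allowed n G k :=
  ((mem_Pr n G).mp h).1

lemma ones_not_mem_Pr : ones n ∉ Pr n G := by
  intro h
  have := ((mem_Pr n G).mp h).2
  rw [sg_ones] at this
  omega

lemma sg_not_mem_Pr {k : Fin n → Fin 3} (h : k ∈ Pr n G) : sg n k ∉ Pr n G := by
  intro h2
  have h3 := ((mem_Pr n G).mp h).2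
  have h4 := ((mem_Pr n G).mp h2).2
  rw [sg_sg] at h4
  omega

lemma allowed_cases {k : Fin n → Fin 3} (ha : allowed n G k) (hne : k ≠ ones n) :
    k ∈ Pr n G ∨ sg n k ∈ Pr n G := by
  have hne2 : sg n k ≠ k := fun h => hne ((sg_eq_self_iff n k).mp h)
  have hF : (F n (sg n k) : ℕ) ≠ (F n k : ℕ) := by
    intro h
    exact hne2 ((F n).injective (Fin.ext h))
  rcases Nat.lt_or_ge (F n k : ℕ) (F n (sg n k) : ℕ) with h | h
  · exact Or.inl ((mem_Pr n G).mpr ⟨ha, h⟩)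
  · refine Or.inr ((mem_Pr n G).mpr ⟨(allowed_sg n G k).mpr ha, ?_⟩)
    rw [sg_sg]
    omega

/-- The number of orbit pairs. -/
def m : ℕ := (Pr n G).card

/-- Enumeration of the orbit pairs. -/
def pe : Fin (m n G) ≃ {x // x ∈ Pr n G} := (Pr n G).equivFin.symm

/-- Coordinates diagonalizing the form. -/
def toC (c : (Fin n → Fin 3) → ℝ) : (Fin (m n G + 1) → ℝ) × (Fin (m n G) → ℝ) :=
  (Fin.cons (c (ones n))
      fun i => (c (pe n G i).1 + c (sg n (pe n G i).1)) / Real.sqrt 2,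
   fun i => (c (pe n G i).1 - c (sg n (pe n G i).1)) / Real.sqrt 2)

/-- Inverse of `toC`. -/
def ofC (u : Fin (m n G + 1) → ℝ) (v : Fin (m n G) → ℝ) : (Fin n → Fin 3) → ℝ := fun k =>
  if k = ones n then u 0
  else if h : k ∈ Pr n G then
    (u ((pe n G).symm ⟨k, h⟩).succ + v ((pe n G).symm ⟨k, h⟩)) / Real.sqrt 2
  else if h : sg n k ∈ Pr n G then
    (u ((pe n G).symm ⟨sg n k, h⟩).succ - v ((pe n G).symm ⟨sg n k, h⟩)) / Real.sqrt 2
  else 0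

lemma ofC_apply_ones (u : Fin (m n G + 1) → ℝ) (v : Fin (m n G) → ℝ) :
    ofC n G u v (ones n) = u 0 := if_pos rfl

lemma ofC_apply_mem (u : Fin (m n G + 1) → ℝ) (v : Fin (m n G) → ℝ)
    {k : Fin n → Fin 3} (h : k ∈ Pr n G) :
    ofC n G u v k =
      (u ((pe n G).symm ⟨k, h⟩).succ + v ((pe n G).symm ⟨k, h⟩)) / Real.sqrt 2 := by
  unfold ofC
  have hne : k ≠ ones n := fun he => ones_not_mem_Pr n G (by rwa [he] at h)
  rw [if_neg hne, dif_pos h]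

lemma ofC_apply_sg_mem (u : Fin (m n G + 1) → ℝ) (v : Fin (m n G) → ℝ)
    {k : Fin n → Fin 3} (h : k ∈ Pr n G) :
    ofC n G u v (sg n k) =
      (u ((pe n G).symm ⟨k, h⟩).succ - v ((pe n G).symm ⟨k, h⟩)) / Real.sqrt 2 := by
  unfold ofC
  have h1 : sg n k ≠ ones n := by
    intro he
    have := congrArg (sg n) he
    rw [sg_sg, sg_ones] at this
    exact ones_not_mem_Pr n G (this ▸ h)
  have h2 : sg n k ∉ Pr n G := sg_not_mem_Pr n G h
  have h3 : sg n (sg n k) ∈ Pr n G := by rw [sg_sg]; exact h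
  rw [if_neg h1, dif_neg h2, dif_pos h3]
  have h4 : (⟨sg n (sg n k), h3⟩ : {x // x ∈ Pr n G}) = ⟨k, h⟩ := Subtype.ext (sg_sg n k)
  rw [h4]

lemma ofC_apply_other (u : Fin (m n G + 1) → ℝ) (v : Fin (m n G) → ℝ)
    {k : Fin n → Fin 3} (h1 : k ≠ ones n) (h2 : k ∉ Pr n G) (h3 : sg n k ∉ Pr n G) :
    ofC n G u v k = 0 := by
  unfold ofC
  rw [if_neg h1, dif_neg h2, dif_neg h3]

lemma ofC_mem (u : Fin (m n G + 1) → ℝ) (v : Fin (m n G) → ℝ) :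
    ofC n G u v ∈ W10 n G := by
  rw [mem_W10_iff]
  intro k hk
  have h1 : k ≠ ones n := fun h => hk (h ▸ allowed_ones n G)
  have h2 : k ∉ Pr n G := fun h => hk (allowed_of_mem_Pr n G h)
  have h3 : sg n k ∉ Pr n G := fun h =>
    hk ((allowed_sg n G k).mp (allowed_of_mem_Pr n G h))
  exact ofC_apply_other n G u v h1 h2 h3

lemma sqrt2_arith : Real.sqrt 2 * Real.sqrt 2 = 2 :=
  Real.mul_self_sqrt (by norm_num)

lemma ofC_toC {c : (Fin n → Fin 3) → ℝ} (hc : c ∈ W10 n G) :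
    ofC n G (toC n G c).1 (toC n G c).2 = c := by
  funext k
  by_cases h1 : k = ones n
  · rw [h1, ofC_apply_ones]
    simp [toC]
  by_cases h2 : k ∈ Pr n G
  · rw [ofC_apply_mem n G _ _ h2]
    simp only [toC, Fin.cons_succ, Equiv.apply_symm_apply]
    rw [← add_div, div_div, sqrt2_arith]
    ring
  by_cases h3 : sg n k ∈ Pr n G
  · have hk : k = sg n (sg n k) := (sg_sg n k).symm
    rw [hk, ofC_apply_sg_mem n G _ _ h3]
    simp only [toC, Fin.cons_succ, Equiv.apply_symm_apply]
    rw [sg_sg, div_sub_div_same, div_div, sqrt2_arith]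
    ring
  · rw [ofC_apply_other n G _ _ h1 h2 h3]
    symm
    refine (mem_W10_iff n G).mp hc k fun ha => ?_
    rcases allowed_cases n G ha h1 with h | h
    · exact h2 h
    · exact h3 h

lemma toC_ofC (u : Fin (m n G + 1) → ℝ) (v : Fin (m n G) → ℝ) :
    toC n G (ofC n G u v) = (u, v) := by
  have hp : ∀ j : Fin (m n G),
      ofC n G u v (pe n G j).1 = (u j.succ + v j) / Real.sqrt 2 ∧
      ofC n G u v (sg n (pe n G j).1) = (u j.succ - v j) / Real.sqrt 2 := by
    intro j
    have hmem := (pe n G j).2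
    constructor
    · rw [ofC_apply_mem n G u v hmem]
      congr 2 <;> rw [Subtype.coe_eta, Equiv.symm_apply_apply]
    · rw [ofC_apply_sg_mem n G u v hmem]
      congr 2 <;> rw [Subtype.coe_eta, Equiv.symm_apply_apply]
  refine Prod.ext ?_ ?_
  · funext i
    induction i using Fin.cases with
    | zero => simp [toC, ofC_apply_ones]
    | succ j =>
      simp only [toC, Fin.cons_succ]
      rw [(hp j).1, (hp j).2, ← add_div, div_div, sqrt2_arith]
      ring
  · funext j
    simp only [toC]
    rw [(hp j).1, (hp j).2, div_sub_div_same, div_div, sqrt2_arith]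
    ring

/-- The diagonalizing linear equivalence. -/
def eW : W10 n G ≃ₗ[ℝ] (Fin (m n G + 1) → ℝ) × (Fin (m n G) → ℝ) where
  toFun c := toC n G c.1
  map_add' a b := by
    refine Prod.ext ?_ ?_ <;> funext i
    · induction i using Fin.cases with
      | zero => simp [toC]
      | succ j =>
        simp only [toC, Fin.cons_succ, Submodule.coe_add, Pi.add_apply, Prod.fst_add]
        ring
    · simp only [toC, Submodule.coe_add, Pi.add_apply, Prod.snd_add]
      ring
  map_smul' r a := by
    refine Prod.ext ?_ ?_ <;> funext i
    · induction i using Fin.cases with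
      | zero => simp [toC]
      | succ j =>
        simp only [toC, Fin.cons_succ, Submodule.coe_smul, Pi.smul_apply,
          Prod.smul_fst, RingHom.id_apply, smul_eq_mul]
        ring
    · simp only [toC, Submodule.coe_smul, Pi.smul_apply, Prod.smul_snd,
        RingHom.id_apply, smul_eq_mul]
      ring
  invFun p := ⟨ofC n G p.1 p.2, ofC_mem n G p.1 p.2⟩
  left_inv c := Subtype.ext (ofC_toC n G c.2)
  right_inv p := by simp only; rw [toC_ofC]

lemma B_eq_toC {c : (Fin n → Fin 3) → ℝ} (hc : c ∈ W10 n G) :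
    B10 n c c = (∑ i, (toC n G c).1 i ^ 2) - ∑ i, (toC n G c).2 i ^ 2 := by
  classical
  have key : ∀ x y : ℝ,
      ((x + y) / Real.sqrt 2) ^ 2 - ((x - y) / Real.sqrt 2) ^ 2 = 2 * (x * y) := by
    intro x y
    rw [div_pow, div_pow, sq (Real.sqrt 2), sqrt2_arith]
    ring
  -- RHS computation
  have hRHS : (∑ i, (toC n G c).1 i ^ 2) - ∑ i, (toC n G c).2 i ^ 2 =
      c (ones n) ^ 2 + ∑ k ∈ Pr n G, 2 * (c k * c (sg n k)) := by
    have h1 : (∑ i, (toC n G c).1 i ^ 2) =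
        c (ones n) ^ 2 + ∑ j : Fin (m n G),
          ((c (pe n G j).1 + c (sg n (pe n G j).1)) / Real.sqrt 2) ^ 2 := by
      rw [Fin.sum_univ_succ]
      simp [toC]
    rw [h1]
    have h2 : ∑ j : Fin (m n G), (toC n G c).2 j ^ 2 =
        ∑ j : Fin (m n G),
          ((c (pe n G j).1 - c (sg n (pe n G j).1)) / Real.sqrt 2) ^ 2 := rfl
    rw [h2, add_sub_assoc, ← Finset.sum_sub_distrib]
    congr 1
    have h3 : ∀ j : Fin (m n G),
        ((c (pe n G j).1 + c (sg n (pe n G j).1)) / Real.sqrt 2) ^ 2 -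
          ((c (pe n G j).1 - c (sg n (pe n G j).1)) / Real.sqrt 2) ^ 2 =
          (fun x : {x // x ∈ Pr n G} => 2 * (c x.1 * c (sg n x.1))) (pe n G j) :=
      fun j => key _ _
    rw [Finset.sum_congr rfl fun j _ => h3 j]
    exact (Equiv.sum_comp (pe n G) (fun x => 2 * (c x.1 * c (sg n x.1)))).trans
      (Finset.sum_coe_sort (Pr n G) (fun k => 2 * (c k * c (sg n k))))
  rw [hRHS, B10_eq]
  -- LHS computation
  set S : Finset (Fin n → Fin 3) :=
    insert (ones n) ((Pr n G) ∪ (Pr n G).image (sg n)) with hS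
  have hvanish : ∀ k ∈ Finset.univ, k ∉ S → c k * c (sg n k) = 0 := by
    intro k _ hk
    simp only [hS, Finset.mem_insert, Finset.mem_union, Finset.mem_image] at hk
    push_neg at hk
    obtain ⟨hk1, hk2, hk3⟩ := hk
    have h3 : sg n k ∉ Pr n G := fun h => hk3 (sg n k) h (sg_sg n k)
    have hna : ¬ allowed n G k := fun ha => by
      rcases allowed_cases n G ha hk1 with h | h
      · exact hk2 h
      · exact h3 h
    rw [(mem_W10_iff n G).mp hc k hna, zero_mul]
  rw [← Finset.sum_subset (Finset.subset_univ S) hvanish]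
  have hd1 : ones n ∉ (Pr n G) ∪ (Pr n G).image (sg n) := by
    simp only [Finset.mem_union, Finset.mem_image]
    push_neg
    refine ⟨ones_not_mem_Pr n G, fun x hx hxe => ?_⟩
    have : x = ones n := by
      have := congrArg (sg n) hxe
      rwa [sg_sg, sg_ones] at this
    exact ones_not_mem_Pr n G (this ▸ hx)
  have hd2 : Disjoint (Pr n G) ((Pr n G).image (sg n)) := by
    rw [Finset.disjoint_left]
    intro k hk hk2
    simp only [Finset.mem_image] at hk2
    obtain ⟨x, hx, hxe⟩ := hk2
    have : sg n k ∈ Pr n G := by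
      have := congrArg (sg n) hxe
      rw [sg_sg] at this
      rwa [← this]
    exact sg_not_mem_Pr n G hk this
  rw [hS, Finset.sum_insert hd1, Finset.sum_union hd2, sg_ones,
    Finset.sum_image (fun x _ y _ h => sg_inj n h)]
  have : ∑ k ∈ Pr n G, c (sg n k) * c (sg n (sg n k)) =
      ∑ k ∈ Pr n G, c (sg n k) * c k :=
    Finset.sum_congr rfl fun k _ => by rw [sg_sg]
  rw [this, ← Finset.sum_add_distrib]
  have : ∑ k ∈ Pr n G, (c k * c (sg n k) + c (sg n k) * c k) =
      ∑ k ∈ Pr n G, 2 * (c k * c (sg n k)) :=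
    Finset.sum_congr rfl fun k _ => by ring
  rw [this]
  ring

end Stmt10Aux

end Stmt10Aux

open Stmt10Aux

/-- Fix `n ≥ 1` and a subgroup `G ≤ {−1,1}ⁿ` acting on
`ℝ[x₁,…,xₙ]` by sign changes of the variables.  On the span `P` of the
monomials `x^k` with `0 ≤ kᵢ ≤ 2` consider
`W = {φ ∈ P : ε·φ = (∏ εᵢ)·φ for all ε ∈ G}` and the symmetric bilinear form
`B(φ,ψ) :=` coefficient of `x₁²⋯xₙ²` in `φψ`.  Then `B` restricted to `W` is
nondegenerate of signature `1`: `dim W = 2m + 1` is odd, and the quadratic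
form `φ ↦ B(φ,φ)` on `W` is equivalent over ℝ to a diagonal form with `m + 1`
entries `+1` and `m` entries `−1`. -/
theorem stmt10 (n : ℕ) (hn : 1 ≤ n) (G : Subgroup (Fin n → ℤˣ)) :
    (∀ x ∈ W10 n G, (∀ y ∈ W10 n G, B10 n x y = 0) → x = 0) ∧
      ∃ (m : ℕ) (e : W10 n G ≃ₗ[ℝ] (Fin (m + 1) → ℝ) × (Fin m → ℝ)),
        Module.finrank ℝ (W10 n G) = 2 * m + 1 ∧
          ∀ x : W10 n G,
            B10 n x x = (∑ i, (e x).1 i ^ 2) - ∑ i, (e x).2 i ^ 2 := by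
  constructor
  · intro x hx hxy
    funext k
    show x k = 0
    by_cases ha : allowed n G k
    · have hy : Pi.single (sg n k) (1:ℝ) ∈ W10 n G := by
        rw [mem_W10_iff]
        intro l hl
        rw [Pi.single_apply, if_neg]
        intro he
        exact hl (by rw [he]; exact (allowed_sg n G k).mpr ha)
      have hB := hxy _ hy
      rw [B10_eq] at hB
      rw [Finset.sum_eq_single k] at hB
      · rwa [Pi.single_apply, if_pos rfl, mul_one] at hB
      · intro l _ hne
        rw [Pi.single_apply, if_neg (fun h => hne (sg_inj n h)), mul_zero]
      · intro h; exact absurd (Finset.mem_univ k) h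
    · exact (mem_W10_iff n G).mp hx k ha
  · refine ⟨m n G, eW n G, ?_, fun x => ?_⟩
    · rw [(eW n G).finrank_eq, Module.finrank_prod]
      simp only [Module.finrank_pi, Fintype.card_fin]
      omega
    · exact B_eq_toC n G x.2
end
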